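/- Let R be a finite-dimensional ℂ-algebra with a central element z (playing the role of ω − r) and suppose 𝔑 = ker(z : R → R) (left multiplication). Let 𝔇 be the ideal of R with 𝔇/R𝔑 = soc(R/R𝔑) and 𝔈 = {a ∈ R : za ∈ soc(R)}. Then z𝔇 ⊆ soc(R) ∩ Im(z), z𝔇 ≅ 𝔇/𝔇∩R𝔑 as R-modules, and 𝔈/R𝔑 ⊆ soc(R/R𝔑); hence multiplication by z induces an isomorphism from soc(R/R𝔑) onto soc(R) ∩ Im(z). -/

import Mathlib

section Aux

variable {R M N : Type*} [Ring R] [AddCommGroup M] [Module R M]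
  [AddCommGroup N] [Module R N]

private lemma aux_isAtom_map (f : M →ₗ[R] N) (hf : Function.Injective f)
    {p : Submodule R M} (hp : IsAtom p) : IsAtom (Submodule.map f p) := by
  rw [← isSimpleModule_iff_isAtom] at hp ⊢
  exact IsSimpleModule.congr (p.equivMapOfInjective f hf).symm

private lemma aux_isSemisimple_of_le {P Q : Submodule R M} (h : P ≤ Q)
    [IsSemisimpleModule R Q] : IsSemisimpleModule R P :=
  IsSemisimpleModule.congr (Submodule.comapSubtypeEquivOfLe h).symm

private lemma aux_le_socle (N' : Submodule R M) (h : IsSemisimpleModule R N') :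
    N' ≤ sSup {I : Submodule R M | IsAtom I} := by
  have h1 : N' = Submodule.map N'.subtype ⊤ := by
    rw [Submodule.map_top, Submodule.range_subtype]
  rw [h1, ← IsSemisimpleModule.sSup_simples_eq_top R N', sSup_eq_iSup,
    (Submodule.gc_map_comap N'.subtype).l_iSup]
  refine iSup_le fun p => ?_
  rw [(Submodule.gc_map_comap N'.subtype).l_iSup]
  refine iSup_le fun hp => le_sSup ?_
  exact aux_isAtom_map _ N'.injective_subtype (isSimpleModule_iff_isAtom.mp hp)

private lemma aux_socle_semisimple :
    IsSemisimpleModule R ↥(sSup {I : Submodule R M | IsAtom I}) := by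
  rw [sSup_eq_iSup]
  refine isSemisimpleModule_biSup_of_isSemisimpleModule_submodule (p := fun i => i) fun i hi => ?_
  have : IsSimpleModule R i := isSimpleModule_iff_isAtom.mpr hi
  infer_instance

private lemma aux_map_semisimple (f : M →ₗ[R] N) (hf : Function.Injective f)
    (P : Submodule R M) [IsSemisimpleModule R P] :
    IsSemisimpleModule R (P.map f) :=
  IsSemisimpleModule.congr (P.equivMapOfInjective f hf).symm

end Aux

theorem stmt_18 {R : Type*} [Ring R] [Algebra ℂ R] [FiniteDimensional ℂ R]
    (z : R) (hz : ∀ a : R, z * a = a * z)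
    (ℓ : R →ₗ[R] R) (hℓ : ∀ a : R, ℓ a = z * a)
    (𝔇 : Submodule R R)
    (h𝔇1 : LinearMap.ker ℓ ≤ 𝔇)
    (h𝔇2 : 𝔇.map (LinearMap.ker ℓ).mkQ =
      sSup {m : Submodule R (R ⧸ LinearMap.ker ℓ) | IsAtom m}) :
    (𝔇.map ℓ ≤ (sSup {I : Submodule R R | IsAtom I}) ⊓ LinearMap.range ℓ) ∧
    (Nonempty ((↥𝔇 ⧸ (LinearMap.ker ℓ).comap 𝔇.subtype) ≃ₗ[R] ↥(𝔇.map ℓ))) ∧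
    ((Submodule.comap ℓ (sSup {I : Submodule R R | IsAtom I})).map (LinearMap.ker ℓ).mkQ ≤
      sSup {m : Submodule R (R ⧸ LinearMap.ker ℓ) | IsAtom m}) ∧
    (∃ eq : ↥(sSup {m : Submodule R (R ⧸ LinearMap.ker ℓ) | IsAtom m}) ≃ₗ[R]
        ↥((sSup {I : Submodule R R | IsAtom I}) ⊓ LinearMap.range ℓ),
      ∀ (a : R) (h : (LinearMap.ker ℓ).mkQ a ∈
          sSup {m : Submodule R (R ⧸ LinearMap.ker ℓ) | IsAtom m}),
        ((eq ⟨(LinearMap.ker ℓ).mkQ a, h⟩ : R)) = z * a) := by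
  set K := LinearMap.ker ℓ with hK
  set socR := sSup {I : Submodule R R | IsAtom I} with hsocR
  set socQ := sSup {m : Submodule R (R ⧸ K) | IsAtom m} with hsocQ
  -- the induced injective map on the quotient
  set f : (R ⧸ K) →ₗ[R] R := K.liftQ ℓ le_rfl with hf
  have hfmk : ∀ a : R, f (K.mkQ a) = ℓ a := fun a => rfl
  have hfinj : Function.Injective f := by
    rw [← LinearMap.ker_eq_bot]
    exact Submodule.ker_liftQ_eq_bot _ _ _ le_rfl
  haveI : IsSemisimpleModule R socQ := aux_socle_semisimple
  haveI : IsSemisimpleModule R socR := aux_socle_semisimple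
  -- `z𝔇 ⊆ soc(R)` part
  have hmap : 𝔇.map ℓ = socQ.map f := by
    rw [← h𝔇2, ← Submodule.map_comp, Submodule.liftQ_mkQ]
  have hzD_soc : 𝔇.map ℓ ≤ socR := by
    rw [hmap]
    exact aux_le_socle _ (aux_map_semisimple f hfinj socQ)
  have hzD_range : 𝔇.map ℓ ≤ LinearMap.range ℓ := by
    rw [← Submodule.map_top]
    exact Submodule.map_mono le_top
  -- the key membership lemma
  have key : ∀ a : R, ℓ a ∈ socR → K.mkQ a ∈ socQ := by
    intro a ha
    have h1 : Submodule.comap f socR ≤ socQ := by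
      refine aux_le_socle _ ?_
      haveI : IsSemisimpleModule R ((Submodule.comap f socR).map f) := by
        refine @aux_isSemisimple_of_le _ _ _ _ _ _ _ (Submodule.map_comap_le f socR) ?_
        infer_instance
      exact IsSemisimpleModule.congr ((Submodule.comap f socR).equivMapOfInjective f hfinj)
    exact h1 (by rw [Submodule.mem_comap, hfmk]; exact ha)
  refine ⟨le_inf hzD_soc hzD_range, ?_, ?_, ?_⟩
  · -- first isomorphism theorem
    set g := ℓ.comp 𝔇.subtype with hg
    have hker : K.comap 𝔇.subtype = LinearMap.ker g := (LinearMap.ker_comp _ _).symm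
    have hrange : LinearMap.range g = 𝔇.map ℓ := by
      rw [hg, LinearMap.range_comp, Submodule.range_subtype]
    exact ⟨(Submodule.quotEquivOfEq _ _ hker).trans
      (g.quotKerEquivRange.trans (LinearEquiv.ofEq _ _ hrange))⟩
  · -- 𝔈/R𝔑 ⊆ soc(R/R𝔑)
    rintro x ⟨a, ha, rfl⟩
    exact key a ha
  · -- the isomorphism
    set g : ↥socQ →ₗ[R] R := f.comp socQ.subtype with hg
    have hg1 : ∀ x : ↥socQ, g x ∈ socR ⊓ LinearMap.range ℓ := by
      rintro ⟨x, hx⟩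
      obtain ⟨a, rfl⟩ := K.mkQ_surjective x
      constructor
      · have : f (K.mkQ a) ∈ socQ.map f := Submodule.mem_map_of_mem hx
        rw [← hmap] at this
        exact hzD_soc this
      · exact ⟨a, (hfmk a).symm⟩
    set g' := g.codRestrict (socR ⊓ LinearMap.range ℓ) hg1 with hg'
    have hbij : Function.Bijective g' := by
      constructor
      · intro x y hxy
        have := congrArg Subtype.val hxy
        simp only [hg', LinearMap.codRestrict_apply, hg, LinearMap.comp_apply] at this
        exact Subtype.ext (hfinj this)
      · rintro ⟨b, hbs, hbr⟩
        obtain ⟨a, rfl⟩ := hbr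
        refine ⟨⟨K.mkQ a, key a hbs⟩, Subtype.ext ?_⟩
        rfl
    refine ⟨LinearEquiv.ofBijective g' hbij, fun a h => ?_⟩
    show (g' ⟨K.mkQ a, h⟩ : R) = z * a
    rw [← hℓ a, ← hfmk a]
    rfl
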